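/- Let k points in PG(k-1,q) be in general position (i.e., any k of them span the whole space, equivalently representative vectors form a basis). Then the union of the (k choose 2) lines through all pairs of these points is a strong blocking set in PG(k-1,q), of size (k choose 2)(q-1) + k. -/
import Mathlib


open Projectivization

/-- The span of a set of projective points. -/
def projSpan {K V : Type*} [DivisionRing K] [AddCommGroup V] [Module K V]
    (M : Set (Projectivization K V)) : Submodule K V :=
  ⨆ P ∈ M, P.submodule

/-- A set of projective points is a strong blocking set if for every hyperplane `H`,
the points of `M` lying on `H` span `H`. -/
def IsStrongBlockingSet {K V : Type*} [DivisionRing K] [AddCommGroup V] [Module K V]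
    (M : Set (Projectivization K V)) : Prop :=
  ∀ H : Submodule K V, Module.finrank K H + 1 = Module.finrank K V →
    projSpan {P | P ∈ M ∧ P.submodule ≤ H} = H

lemma twoTermEq {k : ℕ} {K : Type*} [Field K] {v : Fin k → (Fin k → K)}
    (hv : LinearIndependent K v) {i j i' j' : Fin k} {s t s' t' : K}
    (h : s • v i + t • v j = s' • v i' + t' • v j') (m : Fin k) :
    (if i = m then s else 0) + (if j = m then t else 0)
      = (if i' = m then s' else 0) + (if j' = m then t' else 0) := by
  classical
  have hsum : ∀ (a b : Fin k) (sa tb : K),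
      ∑ m, ((if a = m then sa else 0) + (if b = m then tb else 0)) • v m
        = sa • v a + tb • v b := by
    intro a b sa tb
    simp [add_smul, ite_smul, Finset.sum_add_distrib, Finset.sum_ite_eq]
  have key := Fintype.linearIndependent_iff.mp hv
    (fun m => ((if i = m then s else 0) + (if j = m then t else 0))
      - ((if i' = m then s' else 0) + (if j' = m then t' else 0))) ?_ m
  · exact sub_eq_zero.mp key
  · simp only [sub_smul, Finset.sum_sub_distrib, hsum, h, sub_self]

lemma vAddSmulNeZero {k : ℕ} {K : Type*} [Field K] {v : Fin k → (Fin k → K)}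
    (hv : LinearIndependent K v) {i j : Fin k} (hij : i ≠ j) (c : K) :
    v i + c • v j ≠ 0 := by
  intro h
  have h' : (1:K) • v i + c • v j = (0:K) • v i + (0:K) • v j := by
    simpa using h
  have := twoTermEq hv h' i
  simp [if_neg (Ne.symm hij)] at this

lemma mkV_ne_line {k : ℕ} {K : Type*} [Field K] {v : Fin k → (Fin k → K)}
    (hv : LinearIndependent K v) {m i j : Fin k} (hij : i ≠ j) {c : K} (hc : c ≠ 0)
    (h : Projectivization.mk K (v m) (hv.ne_zero m)
       = Projectivization.mk K (v i + c • v j) (vAddSmulNeZero hv hij c)) : False := by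
  rw [Projectivization.mk_eq_mk_iff] at h
  obtain ⟨a, ha⟩ := h
  have h' : (a : K) • v i + ((a : K) * c) • v j = (1:K) • v m + (0:K) • v m := by
    rw [one_smul, zero_smul, add_zero, ← smul_smul, ← smul_add]
    simpa [Units.smul_def] using ha
  have hti := twoTermEq hv h' i
  have htj := twoTermEq hv h' j
  by_cases hmj : m = j
  · subst hmj
    simp [hij, Ne.symm hij] at hti
  · simp [hij, Ne.symm hmj, hmj] at htj
    exact hc htj

lemma line_inj {k : ℕ} {K : Type*} [Field K] {v : Fin k → (Fin k → K)}
    (hv : LinearIndependent K v) {i j i' j' : Fin k} (hij : i < j) (hij' : i' < j')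
    {c c' : K} (hc : c ≠ 0) (hc' : c' ≠ 0)
    (h : Projectivization.mk K (v i + c • v j) (vAddSmulNeZero hv hij.ne c)
       = Projectivization.mk K (v i' + c' • v j') (vAddSmulNeZero hv hij'.ne c')) :
    i = i' ∧ j = j' ∧ c = c' := by
  rw [Projectivization.mk_eq_mk_iff] at h
  obtain ⟨a, ha⟩ := h
  have h' : (a : K) • v i' + ((a : K) * c') • v j' = (1:K) • v i + c • v j := by
    rw [one_smul, ← smul_smul, ← smul_add]
    simpa [Units.smul_def] using ha
  have a0 : (a : K) ≠ 0 := a.ne_zero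
  by_cases hii : i = i'
  · subst hii
    have hjj : j = j' := by
      by_contra hjj
      have t := twoTermEq hv h' j'
      simp [hij'.ne, Ne.symm hjj, hij.ne, mul_eq_zero, a0, hc'] at t
      rw [if_neg hjj] at t
      simp [mul_eq_zero, a0, hc'] at t
    subst hjj
    have ti := twoTermEq hv h' i
    simp [hij.ne, hij.ne'] at ti
    have tj := twoTermEq hv h' j
    simp [hij.ne, hij.ne'] at tj
    refine ⟨rfl, rfl, ?_⟩
    rw [← tj, ti]
    simp
  · exfalso
    have ti' := twoTermEq hv h' i'
    simp [hij'.ne', hii, Ne.symm hii] at ti'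
    have hji' : j = i' := by
      by_contra hji'
      rw [if_neg hji'] at ti'
      exact a0 ti'
    rw [if_pos hji'] at ti'
    have ti := twoTermEq hv h' i
    by_cases hj'i : j' = i
    · rw [hji'] at hij
      rw [hj'i] at hij'
      exact absurd (hij.trans hij') (lt_irrefl i)
    · have hjne : j ≠ i := by
        rw [hji']; exact Ne.symm hii
      simp [Ne.symm hii, hj'i, hjne] at ti

lemma mkV_inj {k : ℕ} {K : Type*} [Field K] {v : Fin k → (Fin k → K)}
    (hv : LinearIndependent K v) {i j : Fin k}
    (h : Projectivization.mk K (v i) (hv.ne_zero i)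
       = Projectivization.mk K (v j) (hv.ne_zero j)) : i = j := by
  rw [Projectivization.mk_eq_mk_iff] at h
  obtain ⟨a, ha⟩ := h
  by_contra hne
  have h' : (a : K) • v j + (0:K) • v j = (1:K) • v i + (0:K) • v i := by
    simpa [Units.smul_def] using ha
  have := twoTermEq hv h' i
  simp [Ne.symm hne] at this

noncomputable def tetraF {k : ℕ} {K : Type*} [Field K] (v : Fin k → (Fin k → K))
    (hv : LinearIndependent K v) :
    (Fin k ⊕ ({p : Fin k × Fin k // p.1 < p.2} × {c : K // c ≠ 0})) →
      Projectivization K (Fin k → K)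
  | Sum.inl i => Projectivization.mk K (v i) (hv.ne_zero i)
  | Sum.inr x => Projectivization.mk K (v x.1.1.1 + x.2.1 • v x.1.1.2)
      (vAddSmulNeZero hv x.1.2.ne x.2.1)

lemma tetraF_inj {k : ℕ} {K : Type*} [Field K] (v : Fin k → (Fin k → K))
    (hv : LinearIndependent K v) : Function.Injective (tetraF v hv) := by
  rintro (i | ⟨⟨⟨i, j⟩, hij⟩, ⟨c, hc⟩⟩) (i' | ⟨⟨⟨i', j'⟩, hij'⟩, ⟨c', hc'⟩⟩) h
  · exact congrArg Sum.inl (mkV_inj hv h)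
  · exact absurd h (fun h => mkV_ne_line hv hij'.ne hc' h)
  · exact absurd h.symm (fun h => mkV_ne_line hv hij.ne hc h)
  · obtain ⟨h1, h2, h3⟩ := line_inj hv hij hij' hc hc' h
    subst h1; subst h2; subst h3
    rfl

lemma tetraF_range {k : ℕ} {K : Type*} [Field K] (hk : 2 ≤ k) (v : Fin k → (Fin k → K))
    (hv : LinearIndependent K v) :
    {Q : Projectivization K (Fin k → K) |
        ∃ i j : Fin k, i ≠ j ∧ Q.submodule ≤ Submodule.span K {v i, v j}} =
      Set.range (tetraF v hv) := by
  have aux : ∀ (Q : Projectivization K (Fin k → K)) (i j : Fin k), i < j →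
      Q.submodule ≤ Submodule.span K {v i, v j} → Q ∈ Set.range (tetraF v hv) := by
    intro Q i j hlt hle
    have hrep : Q.rep ∈ Submodule.span K ({v i, v j} : Set (Fin k → K)) := by
      apply hle
      rw [Projectivization.submodule_eq]
      exact Submodule.mem_span_singleton_self _
    obtain ⟨s, t, hst⟩ := Submodule.mem_span_pair.mp hrep
    by_cases ht : t = 0
    · have hs : s ≠ 0 := by
        rintro rfl
        apply Q.rep_nonzero
        rw [← hst, ht, zero_smul, zero_smul, add_zero]
      refine ⟨Sum.inl i, ?_⟩
      show Projectivization.mk K (v i) _ = Q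
      conv_rhs => rw [← Q.mk_rep]
      rw [Projectivization.mk_eq_mk_iff']
      exact ⟨s⁻¹, by
        rw [← hst, ht, zero_smul, add_zero, smul_smul, inv_mul_cancel₀ hs, one_smul]⟩
    · by_cases hs : s = 0
      · refine ⟨Sum.inl j, ?_⟩
        show Projectivization.mk K (v j) _ = Q
        conv_rhs => rw [← Q.mk_rep]
        rw [Projectivization.mk_eq_mk_iff']
        exact ⟨t⁻¹, by
          rw [← hst, hs, zero_smul, zero_add, smul_smul, inv_mul_cancel₀ ht, one_smul]⟩
      · refine ⟨Sum.inr ⟨⟨(i, j), hlt⟩, ⟨s⁻¹ * t, by simp [hs, ht]⟩⟩, ?_⟩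
        show Projectivization.mk K (v i + (s⁻¹ * t) • v j) _ = Q
        conv_rhs => rw [← Q.mk_rep]
        rw [Projectivization.mk_eq_mk_iff']
        refine ⟨s⁻¹, ?_⟩
        rw [← hst, smul_add, smul_smul, smul_smul, inv_mul_cancel₀ hs, one_smul]
  ext Q
  constructor
  · rintro ⟨i, j, hij, hle⟩
    rcases hij.lt_or_gt with h | h
    · exact aux Q i j h hle
    · rw [Set.pair_comm] at hle
      exact aux Q j i h hle
  · rintro ⟨(i | ⟨⟨⟨i, j⟩, hij⟩, ⟨c, hc⟩⟩), rfl⟩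
    · haveI : Nontrivial (Fin k) := Fin.nontrivial_iff_two_le.mpr hk
      obtain ⟨j, hj⟩ := exists_ne i
      refine ⟨i, j, Ne.symm hj, ?_⟩
      show (Projectivization.mk K (v i) _).submodule ≤ _
      rw [Projectivization.submodule_mk, Submodule.span_singleton_le_iff_mem]
      exact Submodule.subset_span (Set.mem_insert _ _)
    · refine ⟨i, j, hij.ne, ?_⟩
      show (Projectivization.mk K (v i + c • v j) _).submodule ≤ _
      rw [Projectivization.submodule_mk, Submodule.span_singleton_le_iff_mem]
      exact Submodule.mem_span_pair.mpr ⟨1, c, by rw [one_smul]⟩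

lemma tetraCount {q k : ℕ} (K : Type*) [Field K] [Fintype K] (hq : Fintype.card K = q)
    (hk : 2 ≤ k) (v : Fin k → (Fin k → K)) (hv : LinearIndependent K v) :
    {Q : Projectivization K (Fin k → K) |
        ∃ i j : Fin k, i ≠ j ∧ Q.submodule ≤ Submodule.span K {v i, v j}}.ncard =
        k.choose 2 * (q - 1) + k := by
  classical
  rw [tetraF_range hk v hv, ← Set.image_univ,
    Set.ncard_image_of_injective _ (tetraF_inj v hv), Set.ncard_univ,
    Nat.card_eq_fintype_card]
  rw [Fintype.card_sum, Fintype.card_prod, Fintype.card_fin]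
  have h1 : Fintype.card {c : K // c ≠ 0} = q - 1 := by
    rw [← hq, ← Fintype.card_units]
    exact (Fintype.card_congr unitsEquivNeZero).symm
  have h2 : Fintype.card {p : Fin k × Fin k // p.1 < p.2} = k.choose 2 := by
    rw [Fintype.card_subtype]
    have hcf : (Finset.univ.filter fun p : Fin k × Fin k => p.1 < p.2).card
        = ∑ p : Fin k × Fin k, if p.1 < p.2 then 1 else 0 := Finset.card_filter _ _
    rw [hcf, Fintype.sum_prod_type, Finset.sum_comm]
    have h3 : ∀ j : Fin k, (∑ i : Fin k, if i < j then 1 else 0) = (j : ℕ) := by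
      intro j
      calc ∑ i : Fin k, (if i < j then 1 else 0)
          = (Finset.univ.filter (· < j)).card := (Finset.card_filter _ _).symm
        _ = (Finset.Iio j).card := by congr 1; ext x; simp
        _ = (j : ℕ) := by simp
    rw [Finset.sum_congr rfl fun j _ => h3 j]
    rw [Fin.sum_univ_eq_sum_range (fun i => i) k]
    rw [Finset.sum_range_id, Nat.choose_two_right]
  rw [h1, h2]
  omega

lemma strongBlocking {k : ℕ} {K : Type*} [Field K] (hk : 2 ≤ k)
    (v : Fin k → (Fin k → K)) (hv : LinearIndependent K v) :
    IsStrongBlockingSet {Q : Projectivization K (Fin k → K) |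
        ∃ i j : Fin k, i ≠ j ∧ Q.submodule ≤ Submodule.span K {v i, v j}} := by
  classical
  intro H hH
  haveI : Nonempty (Fin k) := ⟨⟨0, by omega⟩⟩
  have hfr : Module.finrank K (Fin k → K) = k := Module.finrank_fin_fun K
  rw [hfr] at hH
  have hspan : Submodule.span K (Set.range v) = ⊤ :=
    hv.span_eq_top_of_card_eq_finrank (by simp [hfr])
  obtain ⟨j₀, hj₀⟩ : ∃ j₀, v j₀ ∉ H := by
    by_contra hcon
    push_neg at hcon
    have h1 : (⊤ : Submodule K (Fin k → K)) ≤ H := by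
      rw [← hspan]
      exact Submodule.span_le.mpr (by rintro x ⟨i, rfl⟩; exact hcon i)
    have h2 : Module.finrank K H = k := by
      rw [top_le_iff.mp h1, finrank_top, hfr]
    omega
  have hsup : H ⊔ (K ∙ v j₀) = ⊤ := by
    apply Submodule.eq_top_of_finrank_eq
    have hlt : H < H ⊔ (K ∙ v j₀) := by
      refine lt_of_le_of_ne le_sup_left (fun h => hj₀ ?_)
      have h2 : (K ∙ v j₀) ≤ H := h ▸ le_sup_right
      exact h2 (Submodule.mem_span_singleton_self _)
    have h3 := Submodule.finrank_lt_finrank_of_lt hlt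
    have hle := Submodule.finrank_le (H ⊔ (K ∙ v j₀))
    rw [hfr] at hle
    omega
  have hdec : ∀ i, ∃ c : K, v i - c • v j₀ ∈ H := by
    intro i
    have hm : v i ∈ H ⊔ (K ∙ v j₀) := hsup ▸ Submodule.mem_top
    rw [Submodule.mem_sup] at hm
    obtain ⟨y, hy, z, hz, hyz⟩ := hm
    rw [Submodule.mem_span_singleton] at hz
    obtain ⟨c, rfl⟩ := hz
    exact ⟨c, by rw [← hyz, add_sub_cancel_right]; exact hy⟩
  choose c hc using hdec
  set M : Set (Projectivization K (Fin k → K)) := {Q : Projectivization K (Fin k → K) |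
        ∃ i j : Fin k, i ≠ j ∧ Q.submodule ≤ Submodule.span K {v i, v j}} with hM
  set T := projSpan {P | P ∈ M ∧ P.submodule ≤ H} with hT
  have hTle : T ≤ H := by
    refine iSup₂_le ?_
    rintro P ⟨-, hP⟩
    exact hP
  have hwT : ∀ i : Fin k, i ≠ j₀ → v i - c i • v j₀ ∈ T := by
    intro i hi
    have hwnz : v i - c i • v j₀ ≠ 0 := by
      have := vAddSmulNeZero hv hi (-(c i))
      simpa [sub_eq_add_neg] using this
    have hmem : Projectivization.mk K (v i - c i • v j₀) hwnz ∈
        {P | P ∈ M ∧ P.submodule ≤ H} := by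
      constructor
      · refine ⟨i, j₀, hi, ?_⟩
        rw [submodule_mk, Submodule.span_singleton_le_iff_mem]
        exact Submodule.mem_span_pair.mpr ⟨1, -(c i), by module⟩
      · rw [submodule_mk, Submodule.span_singleton_le_iff_mem]
        exact hc i
    have hle : (Projectivization.mk K (v i - c i • v j₀) hwnz).submodule ≤ T :=
      le_iSup₂ (f := fun P (_ : P ∈ {P | P ∈ M ∧ P.submodule ≤ H}) => P.submodule) _ hmem
    apply hle
    rw [submodule_mk]
    exact Submodule.mem_span_singleton_self _
  have hsupT : T ⊔ (K ∙ v j₀) = ⊤ := by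
    rw [← top_le_iff, ← hspan, Submodule.span_le]
    rintro x ⟨i, rfl⟩
    by_cases hi : i = j₀
    · subst hi; exact Submodule.mem_sup_right (Submodule.mem_span_singleton_self _)
    · have hvi : v i = (v i - c i • v j₀) + c i • v j₀ := by abel
      rw [hvi]
      exact Submodule.add_mem _ (Submodule.mem_sup_left (hwT i hi))
        (Submodule.mem_sup_right (Submodule.smul_mem _ _ (Submodule.mem_span_singleton_self _)))
  have hfT : Module.finrank K T = Module.finrank K H := by
    have h1 : Module.finrank K (T ⊔ (K ∙ v j₀) : Submodule K (Fin k → K)) = k := by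
      rw [hsupT, finrank_top, hfr]
    have h2 := Submodule.finrank_add_le_finrank_add_finrank T (K ∙ v j₀)
    rw [finrank_span_singleton (hv.ne_zero j₀)] at h2
    have h3 := Submodule.finrank_mono hTle
    omega
  exact Submodule.eq_of_le_of_finrank_eq hTle hfT

/-- The tetrahedron: given `k` points of `PG(k-1, q)` in general position (their
representative vectors are linearly independent, hence a basis), the union of the
`(k choose 2)` lines through all pairs of these points is a strong blocking set
of size `(k choose 2)(q - 1) + k`. -/
theorem stmt8 {q k : ℕ} (K : Type*) [Field K] [Fintype K] (hq : Fintype.card K = q)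
    (hk : 2 ≤ k) (v : Fin k → (Fin k → K)) (hv : LinearIndependent K v) :
    IsStrongBlockingSet {Q : Projectivization K (Fin k → K) |
        ∃ i j : Fin k, i ≠ j ∧ Q.submodule ≤ Submodule.span K {v i, v j}} ∧
      {Q : Projectivization K (Fin k → K) |
        ∃ i j : Fin k, i ≠ j ∧ Q.submodule ≤ Submodule.span K {v i, v j}}.ncard =
        k.choose 2 * (q - 1) + k := by
  exact ⟨strongBlocking hk v hv, tetraCount K hq hk v hv⟩
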